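/- arXiv:2203.08184 — 3 statements merged into one kernel-verified Lean document; each statement's English description precedes it below -/
import Mathlib

section
/- For all integers N, i, k with 1 ≤ i ≤ N and 0 ≤ k ≤ i-1, the identity N!/((i-1)!·(N-i)!) · C(i-1, k) = C(N, i-k-1) · C(N-i+k, k) · (N-i+k+1) holds. -/
/-- The combinatorial identity
`N!/((i-1)!·(N-i)!) · C(i-1, k) = C(N, i-k-1) · C(N-i+k, k) · (N-i+k+1)`
for `1 ≤ i ≤ N` and `0 ≤ k ≤ i-1`. -/
theorem factorial_choose_identity (N i k : ℕ) (hi1 : 1 ≤ i) (hiN : i ≤ N) (hk : k ≤ i - 1) :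
    (N.factorial : ℝ) / ((i - 1).factorial * (N - i).factorial) * ((i - 1).choose k : ℝ)
      = (N.choose (i - k - 1) : ℝ) * ((N - i + k).choose k : ℝ) * ((N - i + k + 1 : ℕ) : ℝ) := by
  obtain ⟨m, rfl⟩ : ∃ m, i = m + 1 := ⟨i - 1, (Nat.succ_pred_eq_of_pos hi1).symm⟩
  simp only [Nat.add_sub_cancel] at hk ⊢
  obtain ⟨j, rfl⟩ := Nat.le.dest hk
  obtain ⟨t, rfl⟩ := Nat.le.dest hiN
  have h1 : k + j + 1 - k - 1 = j := by omega
  have h2 : k + j + 1 + t - (k + j + 1) + k = t + k := by omega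
  have h3 : k + j + 1 + t - j = k + t + 1 := by omega
  rw [h1, h2,
    Nat.cast_choose ℝ (show j ≤ k + j + 1 + t by omega),
    Nat.cast_choose ℝ (show k ≤ t + k by omega),
    Nat.cast_choose ℝ (show k ≤ k + j by omega), h3]
  have e1 : (t + k) - k = t := by omega
  have e2 : (k + j) - k = j := by omega
  rw [e1, e2]
  rw [show k + j + 1 + t - (k + j + 1) = t from by omega]
  have ftk : ((k + t + 1).factorial : ℝ) = (k + t + 1) * (k + t).factorial := by
    rw [Nat.factorial_succ]; push_cast; ring
  have hpos : ∀ n : ℕ, ((n.factorial : ℝ)) ≠ 0 := fun n => by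
    exact_mod_cast n.factorial_ne_zero
  field_simp
  rw [ftk, show k + t = t + k from by ring]
  push_cast
  ring
end

section
/- For all integers N ≥ 1 and 1 ≤ i ≤ N, (N!/((i-1)!·(N-i)!)) · ∫_0^∞ 2x²·e^{-x²}·(1-e^{-x²})^{i-1}·(e^{-x²})^{N-i} dx = (√π/2) · Σ_{k=0}^{i-1} C(N, i-k-1)·C(N-i+k, k)·(-1)^k / √(N-i+k+1). (Equivalently: the mean of the i-th order statistic of N i.i.d. Rayleigh random variables with scale parameter σ = √2/2 equals this alternating sum.) -/
open Real Finset MeasureTheory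

lemma integral_sq_exp_aux (c : ℝ) (hc : 0 < c) :
    ∫ x in Set.Ioi (0:ℝ), x ^ 2 * Real.exp (-(c * x ^ 2))
      = Real.sqrt Real.pi / 4 * (c * Real.sqrt c)⁻¹ := by
  have h := integral_rpow_mul_exp_neg_mul_rpow (p := 2) (q := 2) (by norm_num) (by norm_num) hc
  have heq : ∀ x : ℝ, x ^ (2:ℝ) * Real.exp (-c * x ^ (2:ℝ))
      = x ^ 2 * Real.exp (-(c * x ^ 2)) := by
    intro x
    rw [show (2:ℝ) = ((2:ℕ):ℝ) by norm_num, Real.rpow_natCast, neg_mul]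
  simp only [heq] at h
  rw [h]
  have h32 : Real.Gamma ((2+1)/2 : ℝ) = Real.sqrt Real.pi / 2 := by
    rw [show ((2+1)/2 : ℝ) = 1/2 + 1 by norm_num, Real.Gamma_add_one (by norm_num),
      Real.Gamma_one_half_eq]
    ring
  rw [h32]
  have : c ^ (-(2+1)/2 : ℝ) = (c * Real.sqrt c)⁻¹ := by
    rw [show (-(2+1)/2 : ℝ) = -(1 + 1/2) by norm_num, Real.rpow_neg hc.le,
      Real.rpow_add hc, Real.rpow_one, Real.sqrt_eq_rpow]
  rw [this]
  ring

lemma comb_aux (j d k : ℕ) (hk : k ≤ j) :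
    ((j+1+d).factorial : ℝ) * (j.choose k)
      = (j.factorial * d.factorial) * ((j+1+d).choose (j-k)) * ((d+k).choose k) * (d+k+1) := by
  have h1 : ((j:ℕ).choose k : ℝ) = j.factorial / (k.factorial * (j-k).factorial) :=
    Nat.cast_choose ℝ hk
  have h2 : (((j+1+d):ℕ).choose (j-k) : ℝ)
      = (j+1+d).factorial / ((j-k).factorial * ((d+k+1)).factorial) := by
    rw [Nat.cast_choose ℝ (by omega : j - k ≤ j+1+d), show j+1+d-(j-k) = d+k+1 by omega]
  have h3 : (((d+k):ℕ).choose k : ℝ) = (d+k).factorial / (k.factorial * d.factorial) := by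
    rw [Nat.cast_choose ℝ (by omega : k ≤ d+k), show d+k-k = d by omega]
  have h4 : ((d+k+1).factorial : ℝ) = (d+k+1) * (d+k).factorial := by
    rw [Nat.factorial_succ]; push_cast; ring
  rw [h1, h2, h3, h4]
  have f1 : (k.factorial : ℝ) ≠ 0 := Nat.cast_ne_zero.2 (Nat.factorial_ne_zero _)
  have f2 : ((j-k).factorial : ℝ) ≠ 0 := Nat.cast_ne_zero.2 (Nat.factorial_ne_zero _)
  have f3 : ((d+k).factorial : ℝ) ≠ 0 := Nat.cast_ne_zero.2 (Nat.factorial_ne_zero _)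
  have f4 : (d.factorial : ℝ) ≠ 0 := Nat.cast_ne_zero.2 (Nat.factorial_ne_zero _)
  have f5 : ((d:ℝ)+k+1) ≠ 0 := by positivity
  field_simp

/-- The mean of the `i`-th order statistic of `N` i.i.d. Rayleigh(σ = √2/2) random variables:
`(N!/((i-1)!(N-i)!)) ∫_0^∞ 2x² e^{-x²} (1-e^{-x²})^{i-1} (e^{-x²})^{N-i} dx
= (√π/2) Σ_{k=0}^{i-1} C(N,i-k-1) C(N-i+k,k) (-1)^k / √(N-i+k+1)`. -/
theorem rayleigh_orderStat_mean (N i : ℕ) (hN : 1 ≤ N) (hi1 : 1 ≤ i) (hiN : i ≤ N) :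
    (N.factorial : ℝ) / ((i - 1).factorial * (N - i).factorial) *
        ∫ x in Set.Ioi (0 : ℝ),
          2 * x ^ 2 * Real.exp (-x ^ 2) * (1 - Real.exp (-x ^ 2)) ^ (i - 1) *
            (Real.exp (-x ^ 2)) ^ (N - i)
      = Real.sqrt Real.pi / 2 *
          ∑ k ∈ Finset.range i,
            (N.choose (i - k - 1) : ℝ) * ((N - i + k).choose k : ℝ) * (-1) ^ k /
              Real.sqrt ((N - i + k + 1 : ℕ) : ℝ) := by
  obtain ⟨j, rfl⟩ : ∃ j, i = j + 1 := ⟨i - 1, by omega⟩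
  obtain ⟨d, rfl⟩ : ∃ d, N = j + 1 + d := ⟨N - (j + 1), by omega⟩
  simp only [Nat.add_sub_cancel, Nat.add_sub_cancel_left]
  -- pointwise binomial expansion of the integrand
  have key : ∀ x : ℝ,
      2 * x ^ 2 * Real.exp (-x ^ 2) * (1 - Real.exp (-x ^ 2)) ^ j *
          (Real.exp (-x ^ 2)) ^ d
        = ∑ k ∈ Finset.range (j + 1),
            ((j.choose k : ℝ) * (-1) ^ k * 2) *
              (x ^ 2 * Real.exp (-(((d + k + 1 : ℕ) : ℝ) * x ^ 2))) := by
    intro x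
    have hbin : (1 - Real.exp (-x ^ 2)) ^ j
        = ∑ k ∈ Finset.range (j + 1),
            (-(Real.exp (-x ^ 2))) ^ k * (1:ℝ) ^ (j - k) * (j.choose k) := by
      rw [sub_eq_add_neg, add_comm, add_pow]
    rw [hbin, Finset.mul_sum, Finset.sum_mul]
    refine Finset.sum_congr rfl fun k _ => ?_
    have hexp : Real.exp (-(((d + k + 1 : ℕ) : ℝ) * x ^ 2))
        = Real.exp (-x ^ 2) * (Real.exp (-x ^ 2)) ^ k * (Real.exp (-x ^ 2)) ^ d := by
      rw [← Real.exp_nat_mul, ← Real.exp_nat_mul, ← Real.exp_add, ← Real.exp_add]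
      congr 1
      push_cast
      ring
    rw [hexp, neg_pow]
    ring
  simp only [key]
  rw [MeasureTheory.integral_finset_sum]
  · simp only [MeasureTheory.integral_const_mul]
    have hval : ∀ k ∈ Finset.range (j + 1),
        (∫ x in Set.Ioi (0:ℝ), x ^ 2 * Real.exp (-(((d + k + 1 : ℕ) : ℝ) * x ^ 2)))
          = Real.sqrt Real.pi / 4 *
              (((d + k + 1 : ℕ) : ℝ) * Real.sqrt ((d + k + 1 : ℕ) : ℝ))⁻¹ := fun k _ =>
      integral_sq_exp_aux _ (by positivity)
    rw [Finset.mul_sum, Finset.mul_sum]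
    refine Finset.sum_congr rfl fun k hk => ?_
    rw [hval k hk]
    have hk' : k ≤ j := by simpa using Nat.lt_succ_iff.mp (Finset.mem_range.mp hk)
    rw [show j + 1 - k - 1 = j - k by omega]
    have hcomb := comb_aux j d k hk'
    have hc : (0:ℝ) < ((d + k + 1 : ℕ) : ℝ) := by positivity
    have hs : (0:ℝ) < Real.sqrt ((d + k + 1 : ℕ) : ℝ) := Real.sqrt_pos.2 hc
    have hfj : (j.factorial : ℝ) ≠ 0 := Nat.cast_ne_zero.2 (Nat.factorial_ne_zero _)
    have hfd : (d.factorial : ℝ) ≠ 0 := Nat.cast_ne_zero.2 (Nat.factorial_ne_zero _)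
    have hcast : ((d + k + 1 : ℕ) : ℝ) = (d : ℝ) + k + 1 := by push_cast; ring
    rw [hcast] at hc hs ⊢
    field_simp
    linear_combination 4 * hcomb
  · intro k _
    apply MeasureTheory.Integrable.const_mul
    have := integrableOn_rpow_mul_exp_neg_mul_sq
      (b := ((d + k + 1 : ℕ) : ℝ)) (by positivity) (s := 2) (by norm_num)
    have heq : (fun x : ℝ => x ^ (2:ℝ) * Real.exp (-((d + k + 1 : ℕ) : ℝ) * x ^ 2))
        = fun x => x ^ 2 * Real.exp (-(((d + k + 1 : ℕ) : ℝ) * x ^ 2)) := by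
      funext x
      rw [show (2:ℝ) = ((2:ℕ):ℝ) by norm_num, Real.rpow_natCast, neg_mul]
    rwa [heq] at this
end

section
/- For all integers N ≥ 1 and 1 ≤ i ≤ N, (N!/((i-1)!·(N-i)!)) · ∫_0^∞ 2x³·e^{-x²}·(1-e^{-x²})^{i-1}·(e^{-x²})^{N-i} dx = Σ_{k=1}^{i} 1/(N-k+1). (Equivalently: the second moment of the i-th order statistic of N i.i.d. Rayleigh random variables with scale parameter σ = √2/2 equals the partial harmonic sum Σ_{k=1}^{i} 1/(N-k+1).) -/
open Real Finset

section aux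
open Set MeasureTheory

lemma intA {c : ℝ} (hc : 0 < c) :
    ∫ x in Ioi (0:ℝ), x ^ 3 * Real.exp (-(c * x ^ 2)) = 1 / (2 * c ^ 2) := by
  have h := integral_rpow_mul_exp_neg_mul_rpow (p := 2) (q := 3) (b := c)
    (by norm_num) (by norm_num) hc
  have heq : ∫ x in Ioi (0:ℝ), x ^ (3:ℝ) * Real.exp (-c * x ^ (2:ℝ))
      = ∫ x in Ioi (0:ℝ), x ^ 3 * Real.exp (-(c * x ^ 2)) := by
    refine setIntegral_congr_fun measurableSet_Ioi (fun x hx => ?_)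
    rw [← Real.rpow_natCast x 3, ← Real.rpow_natCast x 2]
    norm_num
  rw [heq] at h
  rw [h, show (-(3+1)/2 : ℝ) = -2 by norm_num, show ((3:ℝ)+1)/2 = 2 by norm_num,
    show (2:ℝ) = (1:ℕ) + 1 by norm_num, Real.Gamma_nat_eq_factorial,
    Real.rpow_neg hc.le]
  norm_num

lemma intB {c : ℝ} (hc : 0 < c) :
    IntegrableOn (fun x : ℝ => x ^ 3 * Real.exp (-(c * x ^ 2))) (Ioi 0) := by
  have := integrableOn_rpow_mul_exp_neg_mul_sq (b := c) hc (s := 3) (by norm_num)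
  refine this.congr_fun (fun x hx => ?_) measurableSet_Ioi
  rw [← Real.rpow_natCast x 3]
  norm_num

lemma one_sub_pow_expand (y : ℝ) (m : ℕ) :
    (1-y)^m = ∑ j ∈ range (m+1), (-1:ℝ)^j * (m.choose j) * y^j := by
  rw [sub_eq_add_neg, add_comm, add_pow]
  refine Finset.sum_congr rfl fun j hj => ?_
  rw [neg_pow]
  ring

lemma intMain (m b : ℕ) :
    ∫ x in Set.Ioi (0 : ℝ),
        2 * x ^ 3 * Real.exp (-x ^ 2) * (1 - Real.exp (-x ^ 2)) ^ m *
          (Real.exp (-x ^ 2)) ^ b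
      = ∑ j ∈ range (m+1), (-1:ℝ)^j * (m.choose j) / (((b+j+1:ℕ)):ℝ)^2 := by
  have hc : ∀ j : ℕ, (0:ℝ) < ((b+j+1:ℕ):ℝ) := fun j => by positivity
  have hpt : ∀ x : ℝ,
      2 * x ^ 3 * Real.exp (-x ^ 2) * (1 - Real.exp (-x ^ 2)) ^ m *
          (Real.exp (-x ^ 2)) ^ b
        = ∑ j ∈ range (m+1), ((-1:ℝ)^j * (m.choose j) * 2) *
            (x ^ 3 * Real.exp (-(((b+j+1:ℕ):ℝ) * x ^ 2))) := by
    intro x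
    rw [one_sub_pow_expand, Finset.mul_sum, Finset.sum_mul]
    refine Finset.sum_congr rfl fun j hj => ?_
    have he : Real.exp (-(((b+j+1:ℕ):ℝ) * x ^ 2))
        = Real.exp (-x^2) * (Real.exp (-x^2))^j * (Real.exp (-x^2))^b := by
      rw [← Real.exp_nat_mul, ← Real.exp_nat_mul, ← Real.exp_add, ← Real.exp_add]
      congr 1
      push_cast
      ring
    rw [he]
    ring
  rw [setIntegral_congr_fun measurableSet_Ioi (fun x _ => hpt x)]
  rw [MeasureTheory.integral_finset_sum _ (fun j _ =>
    ((intB (hc j)).const_mul _))]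
  refine Finset.sum_congr rfl fun j hj => ?_
  rw [MeasureTheory.integral_const_mul, intA (hc j)]
  field_simp

lemma binom_alt (m : ℕ) (g : ℕ → ℝ) :
    ∑ j ∈ range (m+2), (-1:ℝ)^j * ((m+1).choose j) * g j
      = ∑ j ∈ range (m+1), (-1:ℝ)^j * (m.choose j) * g j
        - ∑ j ∈ range (m+1), (-1:ℝ)^j * (m.choose j) * g (j+1) := by
  have h1 : ∑ j ∈ range (m+2), (-1:ℝ)^j * (m.choose j) * g j
      = ∑ j ∈ range (m+1), (-1:ℝ)^j * (m.choose j) * g j := by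
    rw [Finset.sum_range_succ, Nat.choose_eq_zero_of_lt (by omega)]
    simp
  rw [← h1,
    Finset.sum_range_succ' (fun j => (-1:ℝ)^j * ((m+1).choose j) * g j) (m+1),
    Finset.sum_range_succ' (fun j => (-1:ℝ)^j * (m.choose j) * g j) (m+1)]
  have main : ∀ j ∈ range (m+1), (-1:ℝ)^(j+1) * ((m+1).choose (j+1)) * g (j+1)
      = (-1:ℝ)^(j+1) * (m.choose (j+1)) * g (j+1) - (-1:ℝ)^j * (m.choose j) * g (j+1) := by
    intro j _
    rw [Nat.choose_succ_succ]
    push_cast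
    ring
  rw [Finset.sum_congr rfl main, Finset.sum_sub_distrib]
  simp only [Nat.choose_zero_right]
  ring

lemma key (m : ℕ) : ∀ b : ℕ,
    ∑ j ∈ range (m+1), (-1:ℝ)^j * (m.choose j) / (((b+j+1:ℕ)):ℝ)^2
      = (m.factorial * b.factorial / (m+b+1).factorial) *
          ∑ k ∈ Icc (b+1) (m+b+1), (1:ℝ)/(k:ℝ) := by
  induction m with
  | zero =>
    intro b
    have h1 : ((b:ℝ)+1) ≠ 0 := by positivity
    have h2 : ((b.factorial : ℝ)) ≠ 0 := by positivity
    simp [Nat.factorial_succ]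
    field_simp
  | succ m ih =>
    intro b
    have hb := ih b
    have hb1 := ih (b+1)
    rw [show m+(b+1)+1 = m+b+2 by omega, show b+1+1 = b+2 by omega] at hb1
    have e2 : ∑ j ∈ range (m+1), (-1:ℝ)^j * (m.choose j) / (((b+(j+1)+1:ℕ)):ℝ)^2
        = ∑ j ∈ range (m+1), (-1:ℝ)^j * (m.choose j) / ((((b+1)+j+1:ℕ)):ℝ)^2 := by
      refine Finset.sum_congr rfl fun j _ => ?_
      rw [show b+(j+1)+1 = (b+1)+j+1 by omega]
    have expand := binom_alt m (fun j => 1 / (((b+j+1:ℕ)):ℝ)^2)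
    simp only [mul_one_div] at expand
    rw [show m+1+1 = m+2 by omega, show m+1+b+1 = m+b+2 by omega,
      expand, e2, hb, hb1]
    -- harmonic sum splitting
    have hA : ∑ k ∈ Icc (b+1) (m+b+1), (1:ℝ)/(k:ℝ)
        = 1/((b:ℝ)+1) + ∑ k ∈ Icc (b+2) (m+b+1), (1:ℝ)/(k:ℝ) := by
      rw [← Finset.Ioc_insert_left (show b+1 ≤ m+b+1 by omega),
        Finset.sum_insert (by simp), show b+2 = (b+1)+1 from rfl, Finset.Icc_add_one_left_eq_Ioc]
      push_cast
      simp [one_div]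
    have hB : ∑ k ∈ Icc (b+2) (m+b+2), (1:ℝ)/(k:ℝ)
        = (∑ k ∈ Icc (b+2) (m+b+1), (1:ℝ)/(k:ℝ)) + 1/((m:ℝ)+b+2) := by
      rw [show m+b+2 = (m+b+1)+1 from rfl,
        Finset.sum_Icc_succ_top (show b+2 ≤ m+b+1+1 by omega)]
      push_cast
      ring
    have hC : ∑ k ∈ Icc (b+1) (m+b+2), (1:ℝ)/(k:ℝ)
        = 1/((b:ℝ)+1) + (∑ k ∈ Icc (b+2) (m+b+1), (1:ℝ)/(k:ℝ)) + 1/((m:ℝ)+b+2) := by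
      rw [show m+b+2 = (m+b+1)+1 from rfl,
        Finset.sum_Icc_succ_top (show b+1 ≤ m+b+1+1 by omega), hA]
      push_cast
      ring
    rw [hA, hB, hC]
    -- now pure algebra
    rw [Nat.factorial_succ m, Nat.factorial_succ b,
      show m+b+2 = (m+b+1)+1 from rfl, Nat.factorial_succ (m+b+1)]
    have h1 : ((b:ℝ)+1) ≠ 0 := by positivity
    have h2 : ((m:ℝ)+b+2) ≠ 0 := by positivity
    have h3 : (((m+b+1).factorial : ℝ)) ≠ 0 := by positivity
    push_cast
    field_simp
    ring
end aux

/-- The second moment of the `i`-th order statistic of `N` i.i.d. Rayleigh(σ = √2/2) random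
variables equals the partial harmonic sum:
`(N!/((i-1)!(N-i)!)) ∫_0^∞ 2x³ e^{-x²} (1-e^{-x²})^{i-1} (e^{-x²})^{N-i} dx
= Σ_{k=1}^i 1/(N-k+1)`. -/
theorem rayleigh_orderStat_second_moment (N i : ℕ) (hN : 1 ≤ N) (hi1 : 1 ≤ i) (hiN : i ≤ N) :
    (N.factorial : ℝ) / ((i - 1).factorial * (N - i).factorial) *
        ∫ x in Set.Ioi (0 : ℝ),
          2 * x ^ 3 * Real.exp (-x ^ 2) * (1 - Real.exp (-x ^ 2)) ^ (i - 1) *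
            (Real.exp (-x ^ 2)) ^ (N - i)
      = ∑ k ∈ Finset.Icc 1 i, (1 : ℝ) / ((N - k + 1 : ℕ) : ℝ) := by
  obtain ⟨m, rfl⟩ : ∃ m, i = m + 1 := ⟨i-1, by omega⟩
  obtain ⟨b, rfl⟩ : ∃ b, N = m + b + 1 := ⟨N-(m+1), by omega⟩
  rw [show m+1-1 = m by omega, show m+b+1-(m+1) = b by omega, intMain m b, key m b]
  have hRHS : ∑ k ∈ Icc 1 (m+1), (1:ℝ)/(((m+b+1) - k + 1 : ℕ):ℝ)
      = ∑ k ∈ Icc (b+1) (m+b+1), (1:ℝ)/(k:ℝ) := by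
    refine Finset.sum_nbij' (i := fun k => m+b+2-k) (j := fun k => m+b+2-k)
      ?_ ?_ ?_ ?_ ?_
    · intro a ha; simp only [Finset.mem_Icc] at *; omega
    · intro a ha; simp only [Finset.mem_Icc] at *; omega
    · intro a ha; simp only [Finset.mem_Icc] at *; omega
    · intro a ha; simp only [Finset.mem_Icc] at *; omega
    · intro a ha
      simp only [Finset.mem_Icc] at ha
      have h : (m+b+1) - a + 1 = m + b + 2 - a := by omega
      rw [h]
  rw [hRHS]
  have hf1 : (m.factorial:ℝ) ≠ 0 := by positivity
  have hf2 : (b.factorial:ℝ) ≠ 0 := by positivity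
  have hf3 : ((m+b+1).factorial:ℝ) ≠ 0 := by positivity
  field_simp
end
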